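/- For a continuous function f between metric spaces X and Y, the little Lipschitz derivative lip f : X → [0,∞] is ℱ_σ-lower semicontinuous, i.e. for every real γ the set {x : lip f(x) > γ} is an F_σ subset of X. -/

import Mathlib

open Metric Filter ENNReal Topology

/-- For a continuous f, lip f is ℱ_σ-lower semicontinuous. -/
theorem lip_Fsigma_lowerSemicontinuous {X Y : Type*} [MetricSpace X] [MetricSpace Y]
    (f : X → Y) (hf : Continuous f) :
    ∀ γ : ℝ, ∃ F : ℕ → Set X, (∀ n, IsClosed (F n)) ∧
      {x : X | ENNReal.ofReal γ <
        liminf (fun ρ : ℝ => ⨆ u ∈ ball x ρ, edist (f u) (f x) / ENNReal.ofReal ρ)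
          (𝓝[>] (0:ℝ))} = ⋃ n, F n := by
  intro γ
  set c : ℝ≥0∞ := ENNReal.ofReal γ with hc
  -- b m := c + 1/(m+1)
  set b : ℕ → ℝ≥0∞ := fun m => c + (((m : ℝ≥0∞) + 1))⁻¹ with hb
  have hb_ne_top : ∀ m, b m ≠ ∞ := fun m =>
    ENNReal.add_ne_top.mpr ⟨ENNReal.ofReal_ne_top, ENNReal.inv_ne_top.mpr (by simp)⟩
  have hcb : ∀ m, c < b m := by
    intro m
    have h1 : (((m : ℝ≥0∞) + 1))⁻¹ ≠ 0 :=
      ENNReal.inv_ne_zero.mpr (ENNReal.add_ne_top.mpr (by simp))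
    exact ENNReal.lt_add_right ENNReal.ofReal_ne_top h1
  set E : ℕ → ℕ → Set X := fun m k =>
    {x | ∀ ρ : ℝ, 0 < ρ → ρ ≤ 1 / (k + 1) →
      b m * ENNReal.ofReal ρ ≤ ⨆ u ∈ ball x ρ, edist (f u) (f x)} with hE
  -- each E m k is closed
  have hclosed : ∀ m k, IsClosed (E m k) := by
    intro m k
    apply IsSeqClosed.isClosed
    intro xs x hxs hlim ρ hρ hρr
    set S : ℝ≥0∞ := ⨆ u ∈ ball x ρ, edist (f u) (f x) with hS
    -- suffices for all ρ' ∈ (0, ρ)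
    have key : ∀ ρ' : ℝ, 0 < ρ' → ρ' < ρ → b m * ENNReal.ofReal ρ' ≤ S := by
      intro ρ' hρ'0 hρ'ρ
      rcases eq_or_ne S ∞ with hStop | hS_ne
      · simp [hStop]
      apply ENNReal.le_of_forall_pos_le_add
      intro ε hε _
      -- choose j large
      have h1 : Tendsto (fun j => dist (xs j) x) atTop (𝓝 0) :=
        tendsto_iff_dist_tendsto_zero.mp hlim
      have h2 : Tendsto (fun j => edist (f (xs j)) (f x)) atTop (𝓝 0) := by
        have hcomp := (hf.continuousAt (x := x)).tendsto.comp hlim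
        exact ENNReal.tendsto_nhds_zero.mpr fun δ hδ =>
          ((EMetric.tendsto_nhds.mp hcomp) δ hδ).mono fun j h => h.le
      have hev1 : ∀ᶠ j in atTop, dist (xs j) x < ρ - ρ' :=
        (h1.eventually (eventually_lt_nhds (by linarith)))
      have hev2 : ∀ᶠ j in atTop, edist (f (xs j)) (f x) < (ε : ℝ≥0∞) := by
        have : (0 : ℝ≥0∞) < ε := by exact_mod_cast hε.bot_lt
        exact h2.eventually (eventually_lt_nhds this)
      rcases (hev1.and hev2).exists with ⟨j, hj1, hj2⟩
      have hstep : b m * ENNReal.ofReal ρ' ≤ ⨆ u ∈ ball (xs j) ρ', edist (f u) (f (xs j)) :=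
        hxs j ρ' hρ'0 (by linarith [hρr])
      refine hstep.trans ?_
      apply iSup₂_le
      intro u hu
      have hu' : u ∈ ball x ρ := by
        rw [mem_ball] at hu ⊢
        calc dist u x ≤ dist u (xs j) + dist (xs j) x := dist_triangle _ _ _
          _ < ρ' + (ρ - ρ') := by linarith
          _ = ρ := by ring
      calc edist (f u) (f (xs j)) ≤ edist (f u) (f x) + edist (f x) (f (xs j)) :=
            edist_triangle _ _ _
        _ ≤ S + ε := by
            refine add_le_add ?_ ?_
            · exact le_iSup₂_of_le u hu' le_rfl
            · rw [edist_comm]; exact hj2.le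
    -- pass to the limit ρ' → ρ
    have hcont : Tendsto (fun ρ' : ℝ => b m * ENNReal.ofReal ρ') (𝓝[<] ρ)
        (𝓝 (b m * ENNReal.ofReal ρ)) := by
      apply Tendsto.mono_left _ nhdsWithin_le_nhds
      exact (ENNReal.continuous_const_mul (hb_ne_top m)).continuousAt.comp
        (ENNReal.continuous_ofReal.continuousAt)
    refine le_of_tendsto hcont ?_
    filter_upwards [Ioo_mem_nhdsLT hρ] with ρ' hρ' using key ρ' hρ'.1 hρ'.2
  refine ⟨fun n => E n.unpair.1 n.unpair.2, fun n => hclosed _ _, ?_⟩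
  rw [Set.iUnion_unpair]
  ext x
  simp only [Set.mem_setOf_eq, Set.mem_iUnion]
  constructor
  · intro hx
    obtain ⟨d, hcd, hdL⟩ := exists_between hx
    -- pick m with b m ≤ d
    have hd0 : d - c ≠ 0 := by
      simp only [ne_eq, tsub_eq_zero_iff_le, not_le]; exact hcd
    obtain ⟨m, hm⟩ := ENNReal.exists_inv_nat_lt hd0
    have hbm : b m ≤ d := by
      have h1 : (((m : ℝ≥0∞) + 1))⁻¹ ≤ ((m : ℝ≥0∞))⁻¹ :=
        ENNReal.inv_le_inv.mpr (by simp)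
      have h2 : (((m : ℝ≥0∞) + 1))⁻¹ ≤ d - c := le_of_lt (lt_of_le_of_lt h1 hm)
      calc b m = c + (((m : ℝ≥0∞) + 1))⁻¹ := rfl
        _ ≤ c + (d - c) := add_le_add_right h2 c
        _ = d := by
            rw [add_comm, tsub_add_cancel_of_le hcd.le]
    -- eventually d < g ρ
    have hev : ∀ᶠ ρ in 𝓝[>] (0:ℝ),
        d < ⨆ u ∈ ball x ρ, edist (f u) (f x) / ENNReal.ofReal ρ :=
      Filter.eventually_lt_of_lt_liminf hdL
    rw [eventually_nhdsWithin_iff] at hev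
    rcases Metric.eventually_nhds_iff.mp hev with ⟨ε, hε, hball⟩
    obtain ⟨k, hk⟩ := exists_nat_one_div_lt hε
    refine ⟨m, k, ?_⟩
    intro ρ hρ0 hρr
    have hρε : ρ < ε := lt_of_le_of_lt hρr hk
    have := hball (y := ρ) (by simpa [Real.dist_eq, abs_of_pos hρ0] using hρε) hρ0
    -- d < ⨆ u ∈ ball x ρ, edist / ofReal ρ
    have hle : b m ≤ ⨆ u ∈ ball x ρ, edist (f u) (f x) / ENNReal.ofReal ρ :=
      hbm.trans this.le
    -- convert division
    have hρ_ne : ENNReal.ofReal ρ ≠ 0 := by simp [hρ0]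
    have hρ_top : ENNReal.ofReal ρ ≠ ∞ := ENNReal.ofReal_ne_top
    have hdiv : (⨆ u ∈ ball x ρ, edist (f u) (f x) / ENNReal.ofReal ρ)
        = (⨆ u ∈ ball x ρ, edist (f u) (f x)) / ENNReal.ofReal ρ := by
      rw [ENNReal.iSup_div]
      exact iSup_congr fun u => by rw [ENNReal.iSup_div]
    rw [hdiv] at hle
    exact (ENNReal.le_div_iff_mul_le (Or.inl hρ_ne) (Or.inl hρ_top)).mp hle
  · rintro ⟨m, k, hx⟩
    have hk1 : (0:ℝ) < 1 / (k + 1) := by positivity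
    have hev : ∀ᶠ ρ in 𝓝[>] (0:ℝ),
        b m ≤ ⨆ u ∈ ball x ρ, edist (f u) (f x) / ENNReal.ofReal ρ := by
      filter_upwards [Ioc_mem_nhdsGT_of_mem ⟨le_rfl, hk1⟩] with ρ hρ
      have h := hx ρ hρ.1 hρ.2
      have hρ_ne : ENNReal.ofReal ρ ≠ 0 := by simp [hρ.1]
      have hρ_top : ENNReal.ofReal ρ ≠ ∞ := ENNReal.ofReal_ne_top
      have hdiv : (⨆ u ∈ ball x ρ, edist (f u) (f x) / ENNReal.ofReal ρ)
          = (⨆ u ∈ ball x ρ, edist (f u) (f x)) / ENNReal.ofReal ρ := by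
        rw [ENNReal.iSup_div]
        exact iSup_congr fun u => by rw [ENNReal.iSup_div]
      rw [hdiv]
      exact (ENNReal.le_div_iff_mul_le (Or.inl hρ_ne) (Or.inl hρ_top)).mpr h
    calc c < b m := hcb m
      _ ≤ _ := Filter.le_liminf_of_le (by isBoundedDefault) hev
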